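/- Let λ = ℙ(A₀⁺ ∩ A₀⁻) where A₀⁺ is the event that 0 leads to every j > 0 and A₀⁻ the event that every j < 0 leads to 0. Then λ = ∏_{j=1}^∞ [1 − (1−p_1)⋯(1−p_j)]², and λ > 0 if and only if ∑_{k=1}^∞ (1−p_1)⋯(1−p_k) < ∞. -/

import Mathlib

open MeasureTheory ProbabilityTheory Filter Topology

/-- Configuration: edge indicators. -/
abbrev Cfg := ℤ → ℤ → Bool

/-- There is an edge from `i` to `j`. -/
def Edge (ω : Cfg) (i j : ℤ) : Prop := i < j ∧ ω i j = true

/-- There is a directed path from `i` to `j`. -/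
def Leads (ω : Cfg) : ℤ → ℤ → Prop := Relation.TransGen (Edge ω)

/-- A list of vertices forming a path inside `{a,...,b}`. -/
def IsPathIn (ω : Cfg) (a b : ℤ) (l : List ℤ) : Prop :=
  l ≠ [] ∧ l.Chain' (Edge ω) ∧ ∀ x ∈ l, a ≤ x ∧ x ≤ b

/-- `L ω a b`: maximal number of edges of a path contained in `{a,...,b}`. -/
noncomputable def L (ω : Cfg) (a b : ℤ) : ℕ :=
  sSup {n | ∃ l : List ℤ, IsPathIn ω a b l ∧ l.length = n + 1}

/-- `T ω i j`: maximal number of edges of a path from `i` to `j` (0 if none). -/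
noncomputable def T (ω : Cfg) (i j : ℤ) : ℕ :=
  sSup {n | ∃ l : List ℤ, l.Chain' (Edge ω) ∧ l.head? = some i ∧
    l.getLast? = some j ∧ l.length = n + 1}

/-- The skeleton of the graph. -/
def Skel (ω : Cfg) : Set ℤ :=
  {n | (∀ j, n < j → Leads ω n j) ∧ (∀ j, j < n → Leads ω j n)}

/-- The model hypotheses: independent edges, edge `(i,j)` present w.p. `p (j-i)`. -/
def GraphModel (p : ℕ → ℝ) (μ : Measure Cfg) : Prop :=
  IsProbabilityMeasure μ ∧
  iIndepFun (fun (e : ℤ × ℤ) (ω : Cfg) => (ω e.1 e.2 : Bool)) μ ∧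
  (∀ i j : ℤ, i < j → μ {ω | ω i j = true} = ENNReal.ofReal (p (j - i).toNat)) ∧
  (∀ i j : ℤ, j ≤ i → μ {ω | ω i j = true} = 0)

/-! ### Auxiliary: independence of events over disjoint blocks of coordinates -/

section Blocks

variable {Ω ι κ : Type*}

lemma aux_iIndepSets_blocks {mΩ : MeasurableSpace Ω} {μ : Measure Ω}
    {π : ι → Set (Set Ω)} (h : iIndepSets π μ)
    {S : κ → Set ι} (hS : Pairwise (Function.onFun Disjoint S)) :
    iIndepSets (fun k => piiUnionInter π (S k)) μ := by
  classical
  rw [iIndepSets_iff]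
  intro F f hf
  have hf' : ∀ k, ∃ (t : Finset ι) (g : ι → Set Ω),
      (∀ x ∈ t, g x ∈ π x) ∧ ↑t ⊆ S k ∧ (k ∈ F → f k = ⋂ x ∈ t, g x) := by
    intro k
    by_cases hk : k ∈ F
    · obtain ⟨t, ht, g, hg, he⟩ := hf k hk
      exact ⟨t, g, hg, ht, fun _ => he⟩
    · exact ⟨∅, fun _ => Set.univ, by simp, by simp, fun h' => absurd h' hk⟩
  choose t g hg htS hfe using hf'
  have hdisj : (↑F : Set κ).PairwiseDisjoint t := by
    intro k _ k' _ hne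
    rw [Function.onFun, Finset.disjoint_left]
    intro x hx hx'
    exact Set.disjoint_left.mp (hS hne) (htS k hx) (htS k' hx')
  have hex : ∀ x ∈ F.biUnion t, ∃ k, k ∈ F ∧ x ∈ t k := by
    intro x hx; simpa [Finset.mem_biUnion] using hx
  set G : ι → Set Ω := fun x => if h : ∃ k, k ∈ F ∧ x ∈ t k then g h.choose x else Set.univ
    with hG
  have huniq : ∀ k ∈ F, ∀ x ∈ t k, G x = g k x := by
    intro k hk x hx
    have he : ∃ k', k' ∈ F ∧ x ∈ t k' := ⟨k, hk, hx⟩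
    have hspec := he.choose_spec
    have hkk : he.choose = k := by
      by_contra hne
      exact Set.disjoint_left.mp (hS hne) (htS _ hspec.2) (htS k hx)
    simp only [hG, dif_pos he, hkk]
  have hset : (⋂ k ∈ F, f k) = ⋂ x ∈ F.biUnion t, G x := by
    ext ω
    simp only [Set.mem_iInter]
    constructor
    · intro H x hx
      obtain ⟨k, hk, hxk⟩ := hex x hx
      rw [huniq k hk x hxk]
      have h2 := H k hk
      rw [hfe k hk] at h2
      exact Set.mem_iInter₂.mp h2 x hxk
    · intro H k hk
      rw [hfe k hk]
      refine Set.mem_iInter₂.mpr fun x hx => ?_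
      have hxQ : x ∈ F.biUnion t := Finset.mem_biUnion.mpr ⟨k, hk, hx⟩
      have h2 := H x hxQ
      rwa [huniq k hk x hx] at h2
  have hGmem : ∀ x ∈ F.biUnion t, G x ∈ π x := by
    intro x hx
    obtain ⟨k, hk, hxk⟩ := hex x hx
    rw [huniq k hk x hxk]
    exact hg k x hxk
  rw [hset, h.meas_biInter _ hGmem, Finset.prod_biUnion hdisj]
  refine Finset.prod_congr rfl fun k hk => ?_
  rw [hfe k hk, h.meas_biInter _ (hg k)]
  exact (Finset.prod_congr rfl fun x hx => by rw [huniq k hk x hx]).symm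

lemma aux_iIndep_blocks {mΩ : MeasurableSpace Ω} {μ : Measure Ω} [IsProbabilityMeasure μ]
    {m : ι → MeasurableSpace Ω} (h_le : ∀ i, m i ≤ mΩ) (h : iIndep m μ)
    {S : κ → Set ι} (hS : Pairwise (Function.onFun Disjoint S)) :
    iIndep (fun k => ⨆ i ∈ S k, m i) μ := by
  exact iIndepSets.iIndep (fun k => iSup₂_le fun i _ => h_le i)
    (fun k => piiUnionInter (fun x => {s | MeasurableSet[m x] s}) (S k))
    (fun k => isPiSystem_piiUnionInter _
      (fun x => @MeasurableSpace.isPiSystem_measurableSet Ω (m x)) _)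
    (fun k => (generateFrom_piiUnionInter_measurableSet m (S k)).symm)
    (aux_iIndepSets_blocks h.iIndepSets' hS)

end Blocks

/-! ### Auxiliary real analysis -/

section RealAux

open Topology

variable {ι : Type*}

lemma aux_prod_le_prod_subset {s t : Finset ι} (hst : s ⊆ t) {f : ι → ℝ}
    (h0 : ∀ i ∈ t, 0 ≤ f i) (h1 : ∀ i ∈ t, f i ≤ 1) :
    ∏ i ∈ t, f i ≤ ∏ i ∈ s, f i := by
  classical
  rw [← Finset.prod_sdiff hst]
  have h2 : ∏ i ∈ t \ s, f i ≤ 1 :=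
    Finset.prod_le_one (fun i hi => h0 i (Finset.mem_sdiff.mp hi).1)
      (fun i hi => h1 i (Finset.mem_sdiff.mp hi).1)
  have h3 : 0 ≤ ∏ i ∈ s, f i := Finset.prod_nonneg fun i hi => h0 i (hst hi)
  nlinarith [Finset.prod_nonneg fun i (hi : i ∈ t \ s) => h0 i (Finset.mem_sdiff.mp hi).1]

lemma aux_one_sub_sum_le_prod (s : Finset ι) (x : ι → ℝ)
    (h0 : ∀ i ∈ s, 0 ≤ x i) (h1 : ∀ i ∈ s, x i ≤ 1) :
    1 - ∑ i ∈ s, x i ≤ ∏ i ∈ s, (1 - x i) := by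
  classical
  induction s using Finset.induction_on with
  | empty => simp
  | @insert a s ha ih =>
    rw [Finset.sum_insert ha, Finset.prod_insert ha]
    have hx0 : 0 ≤ x a := h0 a (Finset.mem_insert_self a s)
    have hx1 : x a ≤ 1 := h1 a (Finset.mem_insert_self a s)
    have IH := ih (fun i hi => h0 i (Finset.mem_insert_of_mem hi))
      (fun i hi => h1 i (Finset.mem_insert_of_mem hi))
    have hs0 : 0 ≤ ∑ i ∈ s, x i :=
      Finset.sum_nonneg fun i hi => h0 i (Finset.mem_insert_of_mem hi)
    nlinarith [mul_le_mul_of_nonneg_left IH (by linarith : (0:ℝ) ≤ 1 - x a)]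

lemma aux_hasProd (b : ℕ → ℝ) (h0 : ∀ j, 0 ≤ b j) (h1 : ∀ j, b j ≤ 1) :
    HasProd b (⨅ s : Finset ℕ, ∏ j ∈ s, b j) := by
  have hanti : Antitone (fun s : Finset ℕ => ∏ j ∈ s, b j) := fun s t hst =>
    aux_prod_le_prod_subset hst (fun i _ => h0 i) (fun i _ => h1 i)
  exact tendsto_atTop_ciInf hanti
    ⟨0, fun y ⟨s, hs⟩ => hs ▸ Finset.prod_nonneg fun i _ => h0 i⟩

lemma aux_pos_iff (c : ℕ → ℝ) (hc0 : ∀ j, 0 < c j) (hc1 : ∀ j, c j < 1) {Λ : ℝ}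
    (hΛ : HasProd (fun j => (1 - c j)^2) Λ) :
    (0 < Λ ↔ Summable c) := by
  have hb0 : ∀ j, (0:ℝ) ≤ (1 - c j)^2 := fun j => sq_nonneg _
  have htn : Tendsto (fun N => ∏ j ∈ Finset.range N, (1 - c j)^2) atTop (𝓝 Λ) :=
    hΛ.tendsto_prod_nat
  have hΛ0 : 0 ≤ Λ := ge_of_tendsto' htn fun N => Finset.prod_nonneg fun i _ => hb0 i
  constructor
  · intro hpos
    by_contra hns
    have hub : ∀ N, ∏ j ∈ Finset.range N, (1 - c j)^2
        ≤ Real.exp (-2 * ∑ j ∈ Finset.range N, c j) := by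
      intro N
      have hj : ∀ j ∈ Finset.range N, (1 - c j)^2 ≤ Real.exp (-(2 * c j)) := by
        intro j _
        have h1 : 1 - c j ≤ Real.exp (-(c j)) := by
          nlinarith [Real.add_one_le_exp (-(c j))]
        have h2 : (1 - c j)^2 ≤ (Real.exp (-(c j)))^2 := by
          have := (hc1 j).le
          nlinarith
        calc (1 - c j)^2 ≤ (Real.exp (-(c j)))^2 := h2
        _ = Real.exp (-(2 * c j)) := by
          rw [← Real.exp_nat_mul]; ring_nf
      calc ∏ j ∈ Finset.range N, (1 - c j)^2
          ≤ ∏ j ∈ Finset.range N, Real.exp (-(2 * c j)) :=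
            Finset.prod_le_prod (fun i _ => hb0 i) hj
      _ = Real.exp (∑ j ∈ Finset.range N, -(2 * c j)) := (Real.exp_sum _ _).symm
      _ = Real.exp (-2 * ∑ j ∈ Finset.range N, c j) := by
          congr 1
          rw [Finset.mul_sum]
          exact Finset.sum_congr rfl fun i _ => by ring
    have hsum : Tendsto (fun N => ∑ j ∈ Finset.range N, c j) atTop atTop :=
      (not_summable_iff_tendsto_nat_atTop_of_nonneg (fun n => (hc0 n).le)).mp hns
    have hexp : Tendsto (fun N => Real.exp (-2 * ∑ j ∈ Finset.range N, c j)) atTop (𝓝 0) := by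
      apply Real.tendsto_exp_atBot.comp
      exact Tendsto.const_mul_atTop_of_neg (by norm_num) hsum
    have : Λ ≤ 0 := le_of_tendsto_of_tendsto' htn hexp hub
    linarith
  · intro hsum
    have htail : Tendsto (fun N => ∑' k, c (k + N)) atTop (𝓝 0) := tendsto_sum_nat_add c
    obtain ⟨N, hN⟩ := (htail.eventually (gt_mem_nhds (by norm_num : (0:ℝ) < 1/4))).exists
    set T := ∑' k, c (k + N) with hT
    have hT0 : 0 ≤ T := tsum_nonneg fun k => (hc0 _).le
    set P := ∏ j ∈ Finset.range N, (1 - c j)^2 with hP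
    have hP0 : 0 < P := Finset.prod_pos fun i _ => by nlinarith [hc1 i, hc0 i]
    have hb1 : ∀ j : ℕ, (1 - c j)^2 ≤ 1 := fun j => by nlinarith [hc0 j, hc1 j]
    have hlow : ∀ s : Finset ℕ, P * (1 - 2*T) ≤ ∏ j ∈ s, (1 - c j)^2 := by
      intro s
      classical
      rw [← Finset.prod_filter_mul_prod_filter_not s (· < N)]
      have h1 : P ≤ ∏ j ∈ s.filter (· < N), (1 - c j)^2 := by
        apply aux_prod_le_prod_subset ?_ (fun i _ => hb0 i) (fun i _ => hb1 i)
        intro j hj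
        simpa using (Finset.mem_filter.mp hj).2
      have h2 : 1 - 2*T ≤ ∏ j ∈ s.filter (fun j => ¬ j < N), (1 - c j)^2 := by
        set s2 := s.filter (fun j => ¬ j < N) with hs2
        have hx0 : ∀ j ∈ s2, 0 ≤ 2 * c j - (c j)^2 := fun j _ => by nlinarith [hc0 j, hc1 j]
        have hx1 : ∀ j ∈ s2, 2 * c j - (c j)^2 ≤ 1 := fun j _ => by nlinarith [hc0 j, hc1 j]
        have key := aux_one_sub_sum_le_prod s2 (fun j => 2 * c j - (c j)^2) hx0 hx1
        have heq : ∏ j ∈ s2, (1 - (2 * c j - (c j)^2)) = ∏ j ∈ s2, (1 - c j)^2 :=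
          Finset.prod_congr rfl fun j _ => by ring
        have hsub : ∀ j ∈ s2, N ≤ j := fun j hj => by
          have := (Finset.mem_filter.mp hj).2; omega
        have hinj : ∀ x ∈ s2, ∀ y ∈ s2, x - N = y - N → x = y := fun a ha b hb hab => by
          have := hsub a ha; have := hsub b hb; omega
        have h5 : ∑ j ∈ s2, c j = ∑ k ∈ s2.image (· - N), c (k + N) := by
          rw [Finset.sum_image hinj]
          exact Finset.sum_congr rfl fun j hj => by rw [Nat.sub_add_cancel (hsub j hj)]
        have h6 : ∑ k ∈ s2.image (· - N), c (k + N) ≤ T :=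
          Summable.sum_le_tsum _ (fun k _ => (hc0 _).le) ((summable_nat_add_iff N).mpr hsum)
        have hsb : ∑ j ∈ s2, (2 * c j - (c j)^2) ≤ 2 * T := by
          have h3 : ∀ j ∈ s2, 2 * c j - (c j)^2 ≤ 2 * c j := fun j _ => by
            nlinarith [sq_nonneg (c j)]
          refine le_trans (Finset.sum_le_sum h3) ?_
          rw [← Finset.mul_sum]
          have h4 : ∑ j ∈ s2, c j ≤ T := h5 ▸ h6
          linarith
        calc (1:ℝ) - 2*T ≤ 1 - ∑ j ∈ s2, (2 * c j - (c j)^2) := by linarith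
        _ ≤ ∏ j ∈ s2, (1 - (2 * c j - (c j)^2)) := key
        _ = _ := heq
      have h7 : (0:ℝ) ≤ 1 - 2*T := by linarith
      calc P * (1 - 2*T) ≤ (∏ j ∈ s.filter (· < N), (1 - c j)^2)
            * (∏ j ∈ s.filter (fun j => ¬ j < N), (1 - c j)^2) :=
          mul_le_mul h1 h2 h7 (le_trans hP0.le h1)
      _ = _ := rfl
    have hge : P * (1 - 2*T) ≤ Λ := ge_of_tendsto' hΛ hlow
    nlinarith

lemma aux_reflect (p : ℕ → ℝ) (n : ℕ) :
    ∏ i ∈ Finset.range (n+1), (1 - p (n+1-i)) = ∏ m ∈ Finset.Icc 1 (n+1), (1 - p m) := by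
  rw [← Finset.Ico_add_one_right_eq_Icc, Finset.prod_Ico_eq_prod_range]
  have h0 : n + 1 + 1 - 1 = n + 1 := by omega
  rw [h0, ← Finset.prod_range_reflect (fun j => 1 - p (1 + j)) (n+1)]
  refine Finset.prod_congr rfl fun j hj => ?_
  have hj' : j ≤ n := Nat.lt_succ_iff.mp (Finset.mem_range.mp hj)
  congr 2
  omega

end RealAux

/-! ### Auxiliary combinatorics about `Leads` -/

lemma aux_reflLeads_le {ω : Cfg} {a b : ℤ} (h : Relation.ReflTransGen (Edge ω) a b) : a ≤ b := by
  induction h with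
  | refl => exact le_refl a
  | tail _ h ih => exact ih.trans h.1.le

lemma aux_forall_leads_pos_iff (ω : Cfg) :
    (∀ j : ℤ, 0 < j → Leads ω 0 j) ↔
    (∀ j : ℤ, 0 < j → ∃ i, 0 ≤ i ∧ i < j ∧ ω i j = true) := by
  constructor
  · intro h j hj
    obtain ⟨b, hab, hbc⟩ := Relation.TransGen.tail'_iff.mp (h j hj)
    exact ⟨b, aux_reflLeads_le hab, hbc.1, hbc.2⟩
  · intro h
    suffices H : ∀ n : ℕ, ∀ j : ℤ, j.toNat = n → 0 < j → Leads ω 0 j by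
      intro j hj; exact H j.toNat j rfl hj
    intro n
    induction n using Nat.strong_induction_on with
    | _ n IH =>
      intro j hn hj
      obtain ⟨i, h0i, hij, hω⟩ := h j hj
      rcases eq_or_lt_of_le h0i with hi0 | hi0
      · exact Relation.TransGen.single ⟨hi0 ▸ hij, hi0 ▸ hω⟩
      · have hlt : i.toNat < n := by omega
        exact (IH i.toNat hlt i rfl hi0).tail ⟨hij, hω⟩

lemma aux_forall_leads_neg_iff (ω : Cfg) :
    (∀ j : ℤ, j < 0 → Leads ω j 0) ↔
    (∀ j : ℤ, j < 0 → ∃ i, j < i ∧ i ≤ 0 ∧ ω j i = true) := by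
  constructor
  · intro h j hj
    obtain ⟨b, hab, hbc⟩ := Relation.TransGen.head'_iff.mp (h j hj)
    exact ⟨b, hab.1, aux_reflLeads_le hbc, hab.2⟩
  · intro h
    suffices H : ∀ n : ℕ, ∀ j : ℤ, (-j).toNat = n → j < 0 → Leads ω j 0 by
      intro j hj; exact H (-j).toNat j rfl hj
    intro n
    induction n using Nat.strong_induction_on with
    | _ n IH =>
      intro j hn hj
      obtain ⟨i, hji, hi0, hω⟩ := h j hj
      rcases eq_or_lt_of_le hi0 with hi0' | hi0'
      · exact Relation.TransGen.single ⟨hi0' ▸ hji, hi0' ▸ hω⟩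
      · have hlt : (-i).toNat < n := by omega
        exact Relation.TransGen.head ⟨hji, hω⟩ (IH (-i).toNat hlt i rfl hi0')

/-- The product `(1-p_1)...(1-p_n)`. -/
def Qp (p : ℕ → ℝ) (n : ℕ) : ℝ := ∏ m ∈ Finset.Icc 1 n, (1 - p m)

/-! ### Events and coordinate blocks -/

/-- The event that the edge `(i,j)` is present. -/
def Ct (i j : ℤ) : Set Cfg := {ω | ω i j = true}

lemma aux_measurable_coord (i j : ℤ) : Measurable fun ω : Cfg => ω i j :=
  (measurable_pi_apply j).comp (measurable_pi_apply i)

lemma Ct_ms (i j : ℤ) : MeasurableSet (Ct i j) :=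
  aux_measurable_coord i j (measurableSet_singleton true)

/-- The block events. -/
def Eb : Bool × ℕ → Set Cfg
  | (true, n) => ⋃ i ∈ Finset.range (n+1), Ct (i:ℤ) ((n:ℤ)+1)
  | (false, n) => ⋃ i ∈ Finset.range (n+1), Ct (-((n:ℤ)+1)) (-(i:ℤ))

/-- The blocks of coordinates. -/
def Sb : Bool × ℕ → Set (ℤ × ℤ)
  | (true, n) => {e | e.2 = (n:ℤ)+1 ∧ 0 ≤ e.1 ∧ e.1 < (n:ℤ)+1}
  | (false, n) => {e | e.1 = -((n:ℤ)+1) ∧ -((n:ℤ)+1) < e.2 ∧ e.2 ≤ 0}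

lemma aux_Sb_disj : Pairwise (Function.onFun Disjoint Sb) := by
  rintro ⟨b, n⟩ ⟨b', n'⟩ hne
  rw [Function.onFun, Set.disjoint_left]
  rintro ⟨x, y⟩ he he'
  cases b <;> cases b' <;>
    simp only [Sb, Set.mem_setOf_eq] at he he' <;>
    [ (have : n ≠ n' := by simpa using hne); skip; skip;
      (have : n ≠ n' := by simpa using hne) ] <;>
    omega

lemma aux_A_eq :
    ({ω : Cfg | ∀ j, 0 < j → Leads ω 0 j} ∩ {ω : Cfg | ∀ j, j < 0 → Leads ω j 0})
      = ⋂ k : Bool × ℕ, Eb k := by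
  ext ω
  simp only [Set.mem_inter_iff, Set.mem_setOf_eq, Set.mem_iInter]
  constructor
  · rintro ⟨h1, h2⟩ k
    rw [aux_forall_leads_pos_iff] at h1
    rw [aux_forall_leads_neg_iff] at h2
    obtain ⟨b, n⟩ := k
    cases b
    · obtain ⟨i, hji, hi0, hω⟩ := h2 (-((n:ℤ)+1)) (by omega)
      refine Set.mem_biUnion (show (-i).toNat ∈ Finset.range (n+1) by
        simp only [Finset.mem_range]; omega) ?_
      show ω (-((n:ℤ)+1)) (-(((-i).toNat : ℕ) : ℤ)) = true
      rw [show ((((-i).toNat : ℕ)) : ℤ) = -i by omega]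
      simpa using hω
    · obtain ⟨i, h0i, hij, hω⟩ := h1 ((n:ℤ)+1) (by omega)
      refine Set.mem_biUnion (show i.toNat ∈ Finset.range (n+1) by
        simp only [Finset.mem_range]; omega) ?_
      show ω ((i.toNat : ℕ) : ℤ) ((n:ℤ)+1) = true
      rw [show (((i.toNat : ℕ)) : ℤ) = i by omega]
      exact hω
  · intro h
    constructor
    · rw [aux_forall_leads_pos_iff]
      intro j hj
      have hk := h (true, (j-1).toNat)
      obtain ⟨i, hi, hmem⟩ := Set.mem_iUnion₂.mp hk
      refine ⟨(i : ℤ), by omega, ?_, ?_⟩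
      · have := Finset.mem_range.mp hi; omega
      · have : ((((j-1).toNat : ℕ) : ℤ) + 1) = j := by omega
        rw [← this]
        exact hmem
    · rw [aux_forall_leads_neg_iff]
      intro j hj
      have hk := h (false, (-j-1).toNat)
      obtain ⟨i, hi, hmem⟩ := Set.mem_iUnion₂.mp hk
      refine ⟨-(i : ℤ), ?_, by omega, ?_⟩
      · have := Finset.mem_range.mp hi; omega
      · have : (-((((-j-1).toNat : ℕ) : ℤ) + 1)) = j := by omega
        rw [← this]
        exact hmem

/-- the rate `λ = ℙ(A₀⁺ ∩ A₀⁻)` of the skeleton. -/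
theorem stmt_4 (p : ℕ → ℝ) (hp : ∀ k, 0 ≤ p k ∧ p k < 1) (hp1 : 0 < p 1)
    (μ : Measure Cfg) (hmodel : GraphModel p μ) :
    (μ ({ω | ∀ j, 0 < j → Leads ω 0 j} ∩ {ω | ∀ j, j < 0 → Leads ω j 0})).toReal
      = ∏' j : ℕ, (1 - ∏ m ∈ Finset.Icc 1 (j + 1), (1 - p m)) ^ 2 ∧
    (0 < μ ({ω | ∀ j, 0 < j → Leads ω 0 j} ∩ {ω | ∀ j, j < 0 → Leads ω j 0}) ↔
      Summable (fun k : ℕ => ∏ m ∈ Finset.Icc 1 (k + 1), (1 - p m))) := by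
  classical
  obtain ⟨hprob, hind, htrue, _hdeg⟩ := hmodel
  haveI := hprob
  have hp0 : ∀ m, 0 ≤ 1 - p m := fun m => by linarith [(hp m).2]
  have hp1' : ∀ m, 1 - p m ≤ 1 := fun m => by linarith [(hp m).1]
  have hQ0 : ∀ n, 0 ≤ Qp p n := fun n => Finset.prod_nonneg fun m _ => hp0 m
  have hQ1 : ∀ n, Qp p n ≤ 1 := fun n =>
    Finset.prod_le_one (fun m _ => hp0 m) (fun m _ => hp1' m)
  have hQpos : ∀ n, 0 < Qp p n := fun n => Finset.prod_pos fun m _ => by linarith [(hp m).2]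
  have hQlt1 : ∀ n, Qp p (n+1) < 1 := by
    intro n
    have hsub : ({1} : Finset ℕ) ⊆ Finset.Icc 1 (n+1) := by
      intro x hx; simp only [Finset.mem_singleton] at hx
      subst hx; simp
    have h1 : Qp p (n+1) ≤ 1 - p 1 := by
      have := aux_prod_le_prod_subset hsub (fun m _ => hp0 m) (fun m _ => hp1' m)
      simpa [Qp] using this
    linarith
  -- coordinate independence
  have hIndC := hind.iIndep
  -- measure of a "false" coordinate event
  have hmf : ∀ i j : ℤ, i < j →
      μ {ω : Cfg | ω i j = false} = ENNReal.ofReal (1 - p (j - i).toNat) := by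
    intro i j hij
    have hcompl : {ω : Cfg | ω i j = false} = (Ct i j)ᶜ := by
      ext ω; simp [Ct]
    have h0 : μ (Ct i j) = ENNReal.ofReal (p (j - i).toNat) := htrue i j hij
    rw [hcompl, measure_compl (Ct_ms i j) (measure_ne_top μ _), measure_univ,
      h0, ENNReal.ofReal_sub _ (hp _).1, ENNReal.ofReal_one]
  -- measure of a union block
  have hUnion : ∀ (n : ℕ) (a b : ℕ → ℤ),
      (∀ i, i < n+1 → a i < b i ∧ (b i - a i).toNat = n + 1 - i) →
      (∀ i, i < n+1 → ∀ j, j < n+1 → (a i, b i) = (a j, b j) → i = j) →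
      μ (⋃ i ∈ Finset.range (n+1), Ct (a i) (b i)) = ENNReal.ofReal (1 - Qp p (n+1)) := by
    intro n a b hab hinj
    set U := ⋃ i ∈ Finset.range (n+1), Ct (a i) (b i) with hU
    have hUms : MeasurableSet U := Finset.measurableSet_biUnion _ fun i _ => Ct_ms _ _
    set Tf : Finset (ℤ×ℤ) := (Finset.range (n+1)).image (fun i => (a i, b i)) with hTdef
    have hinj' : ∀ x ∈ Finset.range (n+1), ∀ y ∈ Finset.range (n+1),
        (a x, b x) = (a y, b y) → x = y := fun x hx y hy =>
      hinj x (Finset.mem_range.mp hx) y (Finset.mem_range.mp hy)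
    have hUc : Uᶜ = ⋂ e ∈ Tf, {ω : Cfg | ω e.1 e.2 = false} := by
      ext ω
      simp only [hU, hTdef, Set.mem_compl_iff, Set.mem_iUnion, Set.mem_iInter,
        Finset.mem_image, Ct, Set.mem_setOf_eq, not_exists, Finset.mem_range,
        Bool.not_eq_true]
      constructor
      · rintro hc e ⟨i, hi, rfl⟩
        exact hc i hi
      · rintro hc i hi
        exact hc (a i, b i) ⟨i, hi, rfl⟩
    have hμUc : μ Uᶜ = ENNReal.ofReal (Qp p (n+1)) := by
      have h6 := hIndC.meas_biInter (S := Tf)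
        (s := fun e => {ω : Cfg | ω e.1 e.2 = false}) (fun e _ => ⟨{false}, trivial, rfl⟩)
      rw [hUc, h6, Finset.prod_image hinj']
      have hterm : ∀ i ∈ Finset.range (n+1),
          μ {ω : Cfg | ω (a i) (b i) = false} = ENNReal.ofReal (1 - p (n+1-i)) := by
        intro i hi
        have hi' := Finset.mem_range.mp hi
        rw [hmf _ _ (hab i hi').1, (hab i hi').2]
      rw [Finset.prod_congr rfl hterm,
        ← ENNReal.ofReal_prod_of_nonneg (fun i _ => hp0 _)]
      congr 1
      exact aux_reflect p n
    have hle1 : μ U ≤ 1 := prob_le_one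
    have hcompl2 : μ Uᶜ = 1 - μ U := by
      rw [measure_compl hUms (measure_ne_top μ _), measure_univ]
    have h3 : μ U = 1 - μ Uᶜ := by
      rw [hcompl2, ENNReal.sub_sub_cancel ENNReal.one_ne_top hle1]
    rw [h3, hμUc, ENNReal.ofReal_sub _ (hQ0 _), ENNReal.ofReal_one]
  -- measure of the block events
  have hμEb : ∀ k : Bool × ℕ, μ (Eb k) = ENNReal.ofReal (1 - Qp p (k.2+1)) := by
    rintro ⟨b, n⟩
    cases b
    · exact hUnion n (fun _ => -((n:ℤ)+1)) (fun i => -(i:ℤ))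
        (fun i hi => ⟨by omega, by omega⟩)
        (fun i hi j hj hij => by
          simp only [Prod.mk.injEq] at hij; omega)
    · exact hUnion n (fun i => (i:ℤ)) (fun _ => (n:ℤ)+1)
        (fun i hi => ⟨by omega, by omega⟩)
        (fun i hi j hj hij => by
          simp only [Prod.mk.injEq] at hij; omega)
  -- block independence
  have hBlk : iIndep (fun k : Bool × ℕ =>
      ⨆ e ∈ Sb k, MeasurableSpace.comap (fun ω : Cfg => ω e.1 e.2) inferInstance) μ := by
    apply aux_iIndep_blocks (fun e => (aux_measurable_coord e.1 e.2).comap_le) ?_ aux_Sb_disj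
    exact hIndC
  have hEbms : ∀ k : Bool × ℕ, MeasurableSet[⨆ e ∈ Sb k,
      MeasurableSpace.comap (fun ω : Cfg => ω e.1 e.2) inferInstance] (Eb k) := by
    rintro ⟨b, n⟩
    have hct : ∀ (x y : ℤ), (x,y) ∈ Sb (b,n) → MeasurableSet[⨆ e ∈ Sb (b,n),
        MeasurableSpace.comap (fun ω : Cfg => ω e.1 e.2) inferInstance] (Ct x y) := by
      intro x y hxy
      have hle := le_iSup₂ (f := fun (e : ℤ×ℤ) (_ : e ∈ Sb (b,n)) =>
        MeasurableSpace.comap (fun ω : Cfg => ω e.1 e.2) inferInstance) (x,y) hxy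
      exact hle _ ⟨{true}, trivial, rfl⟩
    cases b
    · refine Finset.measurableSet_biUnion _ fun i hi => hct _ _ ?_
      have hi' := Finset.mem_range.mp hi
      exact ⟨rfl, by omega, by omega⟩
    · refine Finset.measurableSet_biUnion _ fun i hi => hct _ _ ?_
      have hi' := Finset.mem_range.mp hi
      exact ⟨rfl, by omega, by omega⟩
  have hEbM : ∀ k : Bool × ℕ, MeasurableSet (Eb k) := by
    rintro ⟨b, n⟩
    cases b <;> exact Finset.measurableSet_biUnion _ fun i _ => Ct_ms _ _
  -- partial intersections
  set C : ℕ → Set Cfg :=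
    fun N => ⋂ k ∈ (Finset.univ : Finset Bool) ×ˢ Finset.range N, Eb k with hCdef
  have hμC : ∀ N, μ (C N) = ENNReal.ofReal (∏ n ∈ Finset.range N, (1 - Qp p (n+1))^2) := by
    intro N
    have h1 := hBlk.meas_biInter
      (S := (Finset.univ : Finset Bool) ×ˢ Finset.range N) (s := Eb) (fun k _ => hEbms k)
    rw [hCdef]
    rw [h1, Finset.prod_product, Fintype.prod_bool]
    have h2 : ∀ b : Bool, ∏ n ∈ Finset.range N, μ (Eb (b, n))
        = ∏ n ∈ Finset.range N, ENNReal.ofReal (1 - Qp p (n+1)) :=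
      fun b => Finset.prod_congr rfl fun n _ => hμEb (b,n)
    rw [h2 true, h2 false, ← Finset.prod_mul_distrib]
    have h3 : ∀ n ∈ Finset.range N,
        ENNReal.ofReal (1 - Qp p (n+1)) * ENNReal.ofReal (1 - Qp p (n+1))
          = ENNReal.ofReal ((1 - Qp p (n+1))^2) := by
      intro n _
      rw [← ENNReal.ofReal_mul (by linarith [hQ1 (n+1)])]
      congr 1; ring
    rw [Finset.prod_congr rfl h3, ← ENNReal.ofReal_prod_of_nonneg
      (fun n _ => sq_nonneg _)]
  have hCanti : Antitone C := by
    intro N M hNM ω hω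
    refine Set.mem_iInter₂.mpr fun k hk => Set.mem_iInter₂.mp hω k ?_
    simp only [Finset.mem_product, Finset.mem_range] at hk ⊢
    exact ⟨hk.1, lt_of_lt_of_le hk.2 hNM⟩
  have hCms : ∀ N, NullMeasurableSet (C N) μ := fun N =>
    (Finset.measurableSet_biInter _ fun k _ => hEbM k).nullMeasurableSet
  have hCint : ⋂ N, C N = ⋂ k : Bool × ℕ, Eb k := by
    ext ω
    constructor
    · intro hω
      refine Set.mem_iInter.mpr fun k => ?_
      obtain ⟨b, n⟩ := k
      have h1 := Set.mem_iInter.mp hω (n+1)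
      exact Set.mem_iInter₂.mp h1 (b, n)
        (Finset.mem_product.mpr ⟨Finset.mem_univ b, Finset.mem_range.mpr (Nat.lt_succ_self n)⟩)
    · intro hω
      exact Set.mem_iInter.mpr fun N => Set.mem_iInter₂.mpr fun k _ => Set.mem_iInter.mp hω k
  have htendμ : Tendsto (fun N => μ (C N)) atTop (𝓝 (μ (⋂ N, C N))) :=
    tendsto_measure_iInter_atTop hCms hCanti ⟨0, measure_ne_top μ _⟩
  -- infinite product
  have hb0 : ∀ n : ℕ, (0:ℝ) ≤ (1 - Qp p (n+1))^2 := fun n => sq_nonneg _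
  have hb1 : ∀ n : ℕ, (1 - Qp p (n+1))^2 ≤ 1 := fun n => by
    nlinarith [hQ0 (n+1), hQ1 (n+1)]
  have hHP : HasProd (fun n : ℕ => (1 - Qp p (n+1))^2)
      (⨅ s : Finset ℕ, ∏ j ∈ s, (1 - Qp p (j+1))^2) := aux_hasProd _ hb0 hb1
  set Λ : ℝ := ⨅ s : Finset ℕ, ∏ j ∈ s, (1 - Qp p (j+1))^2 with hΛdef
  have htend2 : Tendsto (fun N => ∏ n ∈ Finset.range N, (1 - Qp p (n+1))^2) atTop (𝓝 Λ) :=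
    hHP.tendsto_prod_nat
  have hΛ0 : 0 ≤ Λ := ge_of_tendsto' htend2 fun N => Finset.prod_nonneg fun n _ => hb0 n
  have htend3 : Tendsto (fun N => μ (C N)) atTop (𝓝 (ENNReal.ofReal Λ)) := by
    have h4 := (ENNReal.continuous_ofReal.tendsto Λ).comp htend2
    have h5 : (fun N => ENNReal.ofReal (∏ n ∈ Finset.range N, (1 - Qp p (n+1))^2))
        = fun N => μ (C N) := by
      funext N; rw [hμC]
    rw [← h5]
    exact h4
  have hμA : μ (⋂ N, C N) = ENNReal.ofReal Λ := tendsto_nhds_unique htendμ htend3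
  have hAeq : ({ω : Cfg | ∀ j, 0 < j → Leads ω 0 j}
      ∩ {ω : Cfg | ∀ j, j < 0 → Leads ω j 0}) = ⋂ N, C N := aux_A_eq.trans hCint.symm
  rw [hAeq, hμA]
  constructor
  · rw [ENNReal.toReal_ofReal hΛ0]
    have h8 := hHP.tprod_eq
    simp only [Qp] at h8
    exact h8.symm
  · rw [ENNReal.ofReal_pos]
    have h9 := aux_pos_iff (fun k => Qp p (k+1)) (fun k => hQpos _) (fun k => hQlt1 _) hHP
    simpa only [Qp] using h9
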